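/- Let R be a commutative ring and consider the quotient ring A_n := R[λ_1,…,λ_n]/(σ_1, …, σ_n), where σ_k is the k-th elementary symmetric polynomial. Then A_n is a free R-module of rank n! (this models the oriented cohomology of the full flag variety flag(𝔸^n)). -/

import Mathlib

open MvPolynomial Polynomial

lemma esymm_cons {R : Type*} [CommSemiring R] (a : R) (s : Multiset R) (k : ℕ) :
    (a ::ₘ s).esymm (k + 1) = s.esymm (k + 1) + a * s.esymm k := by
  simp [Multiset.esymm, Multiset.powersetCard_cons, Multiset.map_map, Function.comp_def,
    Multiset.sum_map_mul_left]

noncomputable def EE (S : Type*) [CommRing S] (n : ℕ) :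
    MvPolynomial (Fin (n+1)) S ≃ₐ[S] MvPolynomial (Fin n) (Polynomial S) :=
  (renameEquiv S (_root_.finSuccEquiv n)).trans (optionEquivRight S (Fin n))

lemma EE_X_zero (S : Type*) [CommRing S] (n : ℕ) :
    EE S n (X 0) = MvPolynomial.C Polynomial.X := by
  simp [EE, optionEquivRight_X_none]

lemma EE_X_succ (S : Type*) [CommRing S] (n : ℕ) (i : Fin n) :
    EE S n (X i.succ) = X i := by
  simp [EE, optionEquivRight_X_some]

lemma EE_esymm (S : Type*) [CommRing S] (n k : ℕ) :
    EE S n (esymm (Fin (n+1)) S (k+1)) =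
      esymm (Fin n) (Polynomial S) (k+1)
        + MvPolynomial.C Polynomial.X * esymm (Fin n) (Polynomial S) k := by
  have h1 : EE S n (esymm (Fin (n+1)) S (k+1))
      = aeval (fun i => EE S n (X i)) (esymm (Fin (n+1)) S (k+1)) := by
    have := aeval_unique (EE S n).toAlgHom
    exact congrArg (fun φ => φ (esymm (Fin (n+1)) S (k+1))) this
  rw [h1, aeval_esymm_eq_multiset_esymm]
  have huniv : (Finset.univ : Finset (Fin (n+1))).val
      = 0 ::ₘ ((Finset.univ : Finset (Fin n)).val.map Fin.succ) := by
    rw [Fin.univ_succ]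
    rfl
  rw [huniv, Multiset.map_cons, Multiset.map_map]
  rw [esymm_cons]
  have h2 : (Multiset.map ((fun i => EE S n (X i)) ∘ Fin.succ)
      (Finset.univ : Finset (Fin n)).val) = Multiset.map (X ·) Finset.univ.val := by
    refine Multiset.map_congr rfl ?_
    intro i _
    exact EE_X_succ S n i
  rw [h2, EE_X_zero, esymm_eq_multiset_esymm]

lemma esymm_card_succ_eq_zero (S : Type*) [CommRing S] (n : ℕ) :
    esymm (Fin n) (Polynomial S) (n + 1) = 0 := by
  rw [esymm]
  rw [show (Finset.powersetCard (n+1) (Finset.univ : Finset (Fin n))) = ∅ by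
    rw [Finset.powersetCard_eq_empty]; simp]
  simp

section VV
variable {S : Type*} [CommRing S]

/-- the recursively defined constants -/
noncomputable def vv (cc : ℕ → S) : ℕ → Polynomial S
  | 0 => 1
  | (k+1) => Polynomial.C (cc k) - Polynomial.X * vv cc k

lemma monic_vv [Nontrivial S] (cc : ℕ → S) (k : ℕ) :
    ((-1 : Polynomial S) ^ k * vv cc k).Monic ∧
      ((-1 : Polynomial S) ^ k * vv cc k).natDegree = k := by
  induction k with
  | zero => simp [vv, Polynomial.monic_one]
  | succ k ih =>
    have hrw : (-1 : Polynomial S) ^ (k+1) * vv cc (k+1)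
        = Polynomial.X * ((-1 : Polynomial S) ^ k * vv cc k)
          + (-1 : Polynomial S) ^ (k+1) * Polynomial.C (cc k) := by
      rw [vv]; ring
    have hm : (Polynomial.X * ((-1 : Polynomial S) ^ k * vv cc k)).Monic :=
      Polynomial.monic_X.mul ih.1
    have hdm : (Polynomial.X * ((-1 : Polynomial S) ^ k * vv cc k)).natDegree = k + 1 := by
      rw [Polynomial.natDegree_X_mul ih.1.ne_zero, ih.2]
    have hq : (-1 : Polynomial S) ^ (k+1) * Polynomial.C (cc k)
        = Polynomial.C ((-1 : S) ^ (k+1) * cc k) := by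
      rw [map_mul, map_pow, map_neg, map_one]
    have hlt : ((-1 : Polynomial S) ^ (k+1) * Polynomial.C (cc k)).degree
        < (Polynomial.X * ((-1 : Polynomial S) ^ k * vv cc k)).degree := by
      rw [hq, Polynomial.degree_eq_natDegree hm.ne_zero, hdm]
      refine lt_of_le_of_lt Polynomial.degree_C_le ?_
      exact_mod_cast Nat.succ_pos k
    constructor
    · rw [hrw]; exact hm.add_of_left hlt
    · rw [hrw, Polynomial.natDegree_add_eq_left_of_degree_lt hlt, hdm]
end VV

section Spans
variable {S : Type*} [CommRing S]

/-- abbreviation for esymm in `n` variables over `S[X]` -/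
noncomputable def ee (S : Type*) [CommRing S] (n k : ℕ) : MvPolynomial (Fin n) (Polynomial S) :=
  esymm (Fin n) (Polynomial S) k

/-- the transformed generators -/
noncomputable def U (S : Type*) [CommRing S] (n : ℕ) (cc : ℕ → S) (k : ℕ) :
    MvPolynomial (Fin n) (Polynomial S) :=
  ee S n (k+1) + MvPolynomial.C Polynomial.X * ee S n k - MvPolynomial.C (Polynomial.C (cc k))

/-- the triangular generators -/
noncomputable def W (S : Type*) [CommRing S] (n : ℕ) (cc : ℕ → S) (k : ℕ) :
    MvPolynomial (Fin n) (Polynomial S) :=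
  ee S n k - MvPolynomial.C (vv cc k)

lemma W_zero (n : ℕ) (cc : ℕ → S) : W S n cc 0 = 0 := by
  simp [W, ee, vv, esymm_zero]

lemma W_succ (n : ℕ) (cc : ℕ → S) (k : ℕ) :
    W S n cc (k+1) = U S n cc k - MvPolynomial.C Polynomial.X * W S n cc k := by
  simp only [W, U, vv, map_sub, map_mul]
  ring

lemma W_top (n : ℕ) (cc : ℕ → S) :
    W S n cc (n+1) = - MvPolynomial.C (vv cc (n+1)) := by
  simp [W, ee, esymm_card_succ_eq_zero]

lemma W_mem_spanU (n : ℕ) (cc : ℕ → S) (k : ℕ) (hk : k ≤ n + 1) :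
    W S n cc k ∈ Ideal.span (Set.range fun j : Fin (n+1) => U S n cc j.1) := by
  induction k with
  | zero => rw [W_zero]; exact Ideal.zero_mem _
  | succ k ih =>
    rw [W_succ]
    refine sub_mem ?_ (Ideal.mul_mem_left _ _ (ih (by omega)))
    exact Ideal.subset_span ⟨⟨k, by omega⟩, rfl⟩

lemma spanU_eq_spanW (n : ℕ) (cc : ℕ → S) :
    Ideal.span (Set.range fun j : Fin (n+1) => U S n cc j.1)
      = Ideal.span ({MvPolynomial.C ((-1 : Polynomial S)^(n+1) * vv cc (n+1))} ∪
          Set.range fun j : Fin n => W S n cc (j.1+1)) := by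
  apply le_antisymm <;> rw [Ideal.span_le]
  · rintro _ ⟨j, rfl⟩
    have hW : ∀ k : ℕ, k ≤ n + 1 → W S n cc k ∈
        Ideal.span ({MvPolynomial.C ((-1 : Polynomial S)^(n+1) * vv cc (n+1))} ∪
          Set.range fun j : Fin n => W S n cc (j.1+1)) := by
      intro k hk
      match k, hk with
      | 0, _ => rw [W_zero]; exact Ideal.zero_mem _
      | (k+1), hk =>
        rcases Nat.lt_or_ge k n with h | h
        · exact Ideal.subset_span (Or.inr ⟨⟨k, h⟩, rfl⟩)
        · have hkn : k = n := by omega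
          subst hkn
          rw [W_top]
          have : ((-1 : MvPolynomial (Fin k) (Polynomial S))^(k+1+1)) *
                MvPolynomial.C ((-1 : Polynomial S)^(k+1) * vv cc (k+1))
              = - MvPolynomial.C (vv cc (k+1)) := by
            rw [map_mul]
            rw [show (MvPolynomial.C ((-1 : Polynomial S)^(k+1)) :
                MvPolynomial (Fin k) (Polynomial S)) = (-1)^(k+1) by
              rw [map_pow, map_neg, map_one]]
            rw [← mul_assoc, ← pow_add, show ((-1:MvPolynomial (Fin k) (Polynomial S)))^(k+1+1+(k+1)) = -1 by rw [show k+1+1+(k+1) = 2*(k+1)+1 by ring]; norm_num [pow_succ, pow_mul]]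
            ring
          rw [← this]
          exact Ideal.mul_mem_left _ _ (Ideal.subset_span (Or.inl rfl))
    have hU : U S n cc j.1 = W S n cc (j.1+1) + MvPolynomial.C Polynomial.X * W S n cc j.1 := by
      rw [W_succ]; ring
    show U S n cc j.1 ∈ _
    rw [hU]
    exact add_mem (hW _ (by omega)) (Ideal.mul_mem_left _ _ (hW _ (by omega)))
  · rintro x (rfl | ⟨j, rfl⟩)
    · have : MvPolynomial.C ((-1 : Polynomial S)^(n+1) * vv cc (n+1)) =
          ((-1 : MvPolynomial (Fin n) (Polynomial S))^(n+1+1)) * W S n cc (n+1) := by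
        rw [W_top, map_mul,
          show (MvPolynomial.C ((-1 : Polynomial S)^(n+1)) :
              MvPolynomial (Fin n) (Polynomial S)) = (-1)^(n+1) by
            rw [map_pow, map_neg, map_one]]
        ring
      rw [this]
      exact Ideal.mul_mem_left _ _ (W_mem_spanU n cc (n+1) le_rfl)
    · exact W_mem_spanU n cc (j.1+1) (by omega)
end Spans

/-- curry for pi types, linearly -/
def curryLin (R M : Type*) [Semiring R] [AddCommMonoid M] [Module R M] (ι κ : Type*) :
    ((ι × κ) → M) ≃ₗ[R] (ι → κ → M) where
  toFun := Function.curry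
  invFun := Function.uncurry
  map_add' _ _ := rfl
  map_smul' _ _ := rfl
  left_inv _ := rfl
  right_inv _ := rfl

universe u

set_option maxHeartbeats 2000000 in
theorem key : ∀ (n : ℕ) (S : Type u) (_ : CommRing S) (c : Fin n → S),
    Nonempty ((MvPolynomial (Fin n) S ⧸ Ideal.span (Set.range fun k : Fin n =>
      MvPolynomial.esymm (Fin n) S (k.1+1) - MvPolynomial.C (c k)))
        ≃ₗ[S] (Fin (Nat.factorial n) → S)) := by
  intro n
  induction n with
  | zero =>
    intro S _ c
    have hI : Ideal.span (Set.range fun k : Fin 0 =>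
        MvPolynomial.esymm (Fin 0) S (k.1+1) - MvPolynomial.C (c k)) = ⊥ := by
      rw [Set.range_eq_empty, Ideal.span_empty]
    exact ⟨((Submodule.quotEquivOfEqBot _ hI).restrictScalars S).trans
      ((isEmptyAlgEquiv S (Fin 0)).toLinearEquiv.trans (LinearEquiv.funUnique (Fin 1) S S).symm)⟩
  | succ n IH =>
    intro S _ c
    rcases subsingleton_or_nontrivial S with hS | hS
    · haveI : Subsingleton (MvPolynomial (Fin (n+1)) S) :=
        ⟨fun p q => MvPolynomial.ext p q fun m => Subsingleton.elim _ _⟩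
      haveI : Subsingleton (MvPolynomial (Fin (n+1)) S ⧸ Ideal.span (Set.range
          fun k : Fin (n+1) => MvPolynomial.esymm (Fin (n+1)) S (k.1+1)
            - MvPolynomial.C (c k))) :=
        Quotient.instSubsingletonQuotient _
      exact ⟨LinearEquiv.ofSubsingleton _ _⟩
    -- nontrivial case
    set cc : ℕ → S := fun k => if h : k < n+1 then c ⟨k, h⟩ else 0 with hcc
    set g : Polynomial S := (-1 : Polynomial S)^(n+1) * vv cc (n+1) with hgdef
    have hg : g.Monic := (monic_vv cc (n+1)).1
    have hdeg : g.natDegree = n + 1 := (monic_vv cc (n+1)).2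
    set I : Ideal (MvPolynomial (Fin (n+1)) S) := Ideal.span (Set.range fun k : Fin (n+1) =>
      MvPolynomial.esymm (Fin (n+1)) S (k.1+1) - MvPolynomial.C (c k)) with hI
    set M := MvPolynomial (Fin n) (Polynomial S) with hM
    set W₁ : Ideal M := Ideal.span {MvPolynomial.C g} with hW₁
    set W₂ : Ideal M := Ideal.span (Set.range fun j : Fin n => W S n cc (j.1+1)) with hW₂
    -- transport the ideal through EE
    have hmap : Ideal.map (EE S n) I = W₁ ⊔ W₂ := by
      rw [hI, Ideal.map_span, ← Set.range_comp]
      have : (⇑(EE S n) ∘ fun k : Fin (n+1) =>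
          MvPolynomial.esymm (Fin (n+1)) S (k.1+1) - MvPolynomial.C (c k))
          = fun k : Fin (n+1) => U S n cc k.1 := by
        funext k
        simp only [Function.comp_apply, map_sub]
        rw [EE_esymm]
        have hCc : EE S n (MvPolynomial.C (c k)) = MvPolynomial.C (Polynomial.C (c k)) := by
          have h1 : (MvPolynomial.C (c k) : MvPolynomial (Fin (n+1)) S)
              = algebraMap S _ (c k) := rfl
          rw [h1, AlgEquiv.commutes]
          rw [IsScalarTower.algebraMap_apply S (Polynomial S) M]
          rfl
        rw [hCc, U, ee, ee]
        have : cc k.1 = c k := by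
          rw [hcc]
          simp only [k.isLt, dif_pos]
        rw [this]
      rw [this, spanU_eq_spanW n cc, Ideal.span_union, ← hgdef]
    set I₀ : Ideal (Polynomial S) := Ideal.span {g} with hI₀
    set Sbar := (Polynomial S ⧸ I₀) with hSbar
    set N := MvPolynomial (Fin n) Sbar with hN
    let e1 : (MvPolynomial (Fin (n+1)) S ⧸ I) ≃ₐ[S] (M ⧸ (W₁ ⊔ W₂)) :=
      Ideal.quotientEquivAlg I (W₁ ⊔ W₂) (EE S n) hmap.symm
    letI : CommRing (M ⧸ W₁) := inferInstance
    let e2 := (DoubleQuot.quotQuotEquivQuotSupₐ S W₁ W₂).symm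
    have hW₁I₀ : W₁ = Ideal.map (MvPolynomial.C : Polynomial S →+* M) I₀ := by
      rw [hI₀, Ideal.map_span, Set.image_singleton]
    let Φ := MvPolynomial.quotientEquivQuotientMvPolynomial (σ := Fin n) I₀
    let e3 : (M ⧸ W₁) ≃ₐ[S] N :=
      ((Ideal.quotientEquivAlgOfEq (Polynomial S) hW₁I₀).trans Φ.symm).restrictScalars S
    have he3 : ∀ p : M, e3 (Ideal.Quotient.mk W₁ p)
        = MvPolynomial.map (Ideal.Quotient.mk I₀) p := by
      intro p
      show Φ.symm (Ideal.Quotient.mk _ p) = _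
      simp [Φ, MvPolynomial.quotientEquivQuotientMvPolynomial]
      exact DFunLike.congr_fun (MvPolynomial.ringHom_ext (by simp) (by simp)) p
    set cbar : Fin n → Sbar := fun k => Ideal.Quotient.mk I₀ (vv cc (k.1+1)) with hcbar
    set Jbar : Ideal N := Ideal.span (Set.range fun k : Fin n =>
      MvPolynomial.esymm (Fin n) Sbar (k.1+1) - MvPolynomial.C (cbar k)) with hJbar
    have hmap2 : Ideal.map e3 (Ideal.map (Ideal.Quotient.mkₐ S W₁) W₂) = Jbar := by
      rw [hW₂, Ideal.map_span, Ideal.map_span, ← Set.image_comp, ← Set.range_comp, hJbar]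
      have hfun : ((⇑e3 ∘ ⇑(Ideal.Quotient.mkₐ S W₁)) ∘ fun j : Fin n => W S n cc (j.1+1))
          = fun k : Fin n => MvPolynomial.esymm (Fin n) Sbar (k.1+1)
            - MvPolynomial.C (cbar k) := by
        funext j
        show e3 (Ideal.Quotient.mk W₁ (W S n cc (j.1+1))) = _
        rw [he3, W, ee, map_sub, MvPolynomial.map_esymm, MvPolynomial.map_C]
      rw [hfun]
    letI : CommRing N := inferInstance
    let e4 : ((M ⧸ W₁) ⧸ (Ideal.map (Ideal.Quotient.mkₐ S W₁) W₂)) ≃ₐ[S] (N ⧸ Jbar) :=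
      Ideal.quotientEquivAlg _ _ e3 hmap2.symm
    obtain ⟨e5⟩ := IH Sbar inferInstance cbar
    let e5' := e5.restrictScalars S
    let blin : Sbar ≃ₗ[S] (Fin (n+1) → S) :=
      (((AdjoinRoot.powerBasis' hg).basis).reindex (finCongr hdeg)).equivFun
    let e6 : (Fin (Nat.factorial n) → Sbar) ≃ₗ[S] (Fin (Nat.factorial n) → Fin (n+1) → S) :=
      LinearEquiv.piCongrRight (fun _ => blin)
    let e7 := (curryLin S S (Fin (Nat.factorial n)) (Fin (n+1))).symm
    have hfact : Nat.factorial (n+1) = Nat.factorial n * (n+1) := by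
      rw [Nat.factorial_succ]; ring
    let eFin : Fin (Nat.factorial (n+1)) ≃ (Fin (Nat.factorial n) × Fin (n+1)) :=
      (finCongr hfact).trans finProdFinEquiv.symm
    let e8 : ((Fin (Nat.factorial n) × Fin (n+1)) → S) ≃ₗ[S] (Fin (Nat.factorial (n+1)) → S) :=
      LinearEquiv.funCongrLeft S S eFin
    exact ⟨e1.toLinearEquiv.trans (e2.toLinearEquiv.trans (e4.toLinearEquiv.trans
      (e5'.trans (e6.trans (e7.trans e8)))))⟩

/-- The coinvariant algebra `R[λ₁,…,λₙ]/(σ₁,…,σₙ)` (modeling the oriented cohomology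
of the full flag variety `flag(𝔸ⁿ)`) is a free `R`-module of rank `n!`. -/
theorem stmt_8 (R : Type*) [CommRing R] (n : ℕ) :
    Nonempty ((MvPolynomial (Fin n) R ⧸
        Ideal.span (Set.range fun k : Fin n => MvPolynomial.esymm (Fin n) R (k.1 + 1)))
      ≃ₗ[R] (Fin (Nat.factorial n) → R)) := by
  obtain ⟨e⟩ := key n R inferInstance 0
  have h : (Set.range fun k : Fin n =>
      MvPolynomial.esymm (Fin n) R (k.1+1) - MvPolynomial.C ((0 : Fin n → R) k))
      = (Set.range fun k : Fin n => MvPolynomial.esymm (Fin n) R (k.1+1)) := by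
    simp
  rw [← h]
  exact ⟨e⟩
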